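/- Let a, b : ℕ → ℂ satisfy a(0) = b(0) = 0, a(1) = b(1) = 1, and be multiplicative, i.e. a(mn) = a(m)·a(n) and b(mn) = b(m)·b(n) for all coprime m, n ≥ 1. Assume that for every prime q there exist α_q, β_q, α'_q, β'_q ∈ ℂ with a(q^n) = h_n(α_q,β_q) and b(q^n) = h_n(α'_q,β'_q) for all n ≥ 0. Let s ∈ ℂ be such that ∑_{n≥1} |a(n)·b(n)|·n^{−Re(s)} < ∞ and such that max(|α_qα'_q|, |α_qβ'_q|, |β_qα'_q|, |β_qβ'_q|) < q^{Re(s)} for every prime q. Then ∑_{n≥1} a(n)·b(n)·n^{−s} = ∏_{q prime} (1 − α_qβ_qα'_qβ'_q·q^{−2s}) · [(1 − α_qα'_q·q^{−s})(1 − α_qβ'_q·q^{−s})(1 − β_qα'_q·q^{−s})(1 − β_qβ'_q·q^{−s})]^{−1}, where each of the four linear factors at each prime q is nonzero and the product over all primes q converges. -/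

import Mathlib

/-- `h n α β = ∑_{i=0}^{n} α^i β^(n-i)`. -/
noncomputable def hSym (n : ℕ) (α β : ℂ) : ℂ :=
  ∑ i ∈ Finset.range (n + 1), α ^ i * β ^ (n - i)

lemma hSym_zero (α β : ℂ) : hSym 0 α β = 1 := by simp [hSym]

lemma hSym_comm (n : ℕ) (α β : ℂ) : hSym n α β = hSym n β α := by
  unfold hSym
  rw [← Finset.sum_range_reflect]
  refine Finset.sum_congr rfl fun i hi => ?_
  have hi' : i ≤ n := by simpa [Nat.lt_succ_iff] using hi
  rw [Nat.succ_sub_one]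
  have : n - (n - i) = i := Nat.sub_sub_self hi'
  rw [this, mul_comm]

lemma hSym_succ (n : ℕ) (α β : ℂ) : hSym (n + 1) α β = α * hSym n α β + β ^ (n + 1) := by
  unfold hSym
  rw [Finset.sum_range_succ', Finset.mul_sum]
  congr 1
  · refine Finset.sum_congr rfl fun i hi => ?_
    rw [Nat.succ_sub_succ]
    ring
  · simp

lemma hSym_rec (n : ℕ) (α β : ℂ) :
    hSym (n + 2) α β = (α + β) * hSym (n + 1) α β - α * β * hSym n α β := by
  have h1 : hSym (n + 1) α β = α * hSym n α β + β ^ (n + 1) := hSym_succ n α β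
  have h3 : hSym (n + 2) α β = α * hSym (n + 1) α β + β ^ (n + 2) := hSym_succ (n+1) α β
  have hb : (β:ℂ) ^ (n+2) = β * β ^ (n+1) := by ring
  rw [h3, hb, show (β:ℂ)^(n+1) = hSym (n+1) α β - α * hSym n α β by rw [h1]; ring]
  ring

lemma hSym_one (α β : ℂ) : hSym 1 α β = α + β := by
  simp [hSym, Finset.sum_range_succ]; ring

lemma hSym_two (α β : ℂ) : hSym 2 α β = α^2 + α*β + β^2 := by
  simp [hSym, Finset.sum_range_succ]; ring

lemma hSym_three (α β : ℂ) : hSym 3 α β = α^3 + α^2*β + α*β^2 + β^3 := by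
  simp [hSym, Finset.sum_range_succ]; ring

lemma norm_hSym_le (n : ℕ) (α β : ℂ) : ‖hSym n α β‖ ≤ (n + 1) * max ‖α‖ ‖β‖ ^ n := by
  unfold hSym
  refine (norm_sum_le _ _).trans ?_
  have h : ∀ i ∈ Finset.range (n + 1), ‖α ^ i * β ^ (n - i)‖ ≤ max ‖α‖ ‖β‖ ^ n := by
    intro i hi
    have hi' : i ≤ n := by simpa [Nat.lt_succ_iff] using hi
    rw [norm_mul, norm_pow, norm_pow]
    calc ‖α‖ ^ i * ‖β‖ ^ (n - i) ≤ max ‖α‖ ‖β‖ ^ i * max ‖α‖ ‖β‖ ^ (n - i) := by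
          gcongr <;> simp [le_max_left, le_max_right]
      _ = max ‖α‖ ‖β‖ ^ n := by rw [← pow_add, Nat.add_sub_cancel' hi']
  refine (Finset.sum_le_sum h).trans ?_
  simp [Finset.sum_const, Finset.card_range]

lemma local_summable {α β α' β' x : ℂ}
    (h1 : ‖α * α' * x‖ < 1) (h2 : ‖α * β' * x‖ < 1)
    (h3 : ‖β * α' * x‖ < 1) (h4 : ‖β * β' * x‖ < 1) :
    Summable (fun n : ℕ => hSym n α β * hSym n α' β' * x ^ n) := by
  set r : ℝ := max ‖α‖ ‖β‖ * max ‖α'‖ ‖β'‖ * ‖x‖ with hrdef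
  have hr0 : 0 ≤ r := by positivity
  have hrlt : r < 1 := by
    rcases max_cases ‖α‖ ‖β‖ with ⟨h, _⟩ | ⟨h, _⟩ <;>
      rcases max_cases ‖α'‖ ‖β'‖ with ⟨h', _⟩ | ⟨h', _⟩ <;>
      rw [hrdef, h, h', ← norm_mul, ← norm_mul] <;> assumption
  have hsum : Summable (fun n : ℕ => ((n : ℝ) + 1) ^ 2 * r ^ n) := by
    have hrn : ‖r‖ < 1 := by rwa [Real.norm_eq_abs, abs_of_nonneg hr0]
    have s2 := summable_pow_mul_geometric_of_norm_lt_one 2 hrn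
    have s1 := summable_pow_mul_geometric_of_norm_lt_one 1 hrn
    have s0 := summable_pow_mul_geometric_of_norm_lt_one 0 hrn
    have := (s2.add ((s1.mul_left 2))).add s0
    refine this.congr fun n => ?_
    push_cast
    ring
  refine Summable.of_norm_bounded hsum fun n => ?_
  rw [norm_mul, norm_mul, norm_pow]
  calc ‖hSym n α β‖ * ‖hSym n α' β'‖ * ‖x‖ ^ n
      ≤ ((n + 1) * max ‖α‖ ‖β‖ ^ n) * ((n + 1) * max ‖α'‖ ‖β'‖ ^ n) * ‖x‖ ^ n := by
        gcongr <;> first | exact norm_hSym_le _ _ _ | positivity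
    _ = ((n : ℝ) + 1) ^ 2 * r ^ n := by rw [hrdef, mul_pow, mul_pow]; ring

lemma one_sub_ne_zero_of_norm_lt_one {y : ℂ} (h : ‖y‖ < 1) : (1 : ℂ) - y ≠ 0 := by
  intro hy
  have : y = 1 := by linear_combination -hy
  rw [this] at h
  simp at h

lemma local_identity {α β α' β' x : ℂ}
    (h1 : ‖α * α' * x‖ < 1) (h2 : ‖α * β' * x‖ < 1)
    (h3 : ‖β * α' * x‖ < 1) (h4 : ‖β * β' * x‖ < 1) :
    (∑' n : ℕ, hSym n α β * hSym n α' β' * x ^ n) =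
      (1 - α * β * α' * β' * x ^ 2) *
        ((1 - α * α' * x) * (1 - α * β' * x) * (1 - β * α' * x) * (1 - β * β' * x))⁻¹ := by
  set c : ℕ → ℂ := fun n => hSym n α β * hSym n α' β' * x ^ n with hc
  have hS : Summable c := local_summable h1 h2 h3 h4
  set S : ℂ := ∑' n, c n with hSdef
  set e1 : ℂ := α*α' + α*β' + β*α' + β*β' with he1
  set e2 : ℂ := (α*α')*(α*β') + (α*α')*(β*α') + (α*α')*(β*β') + (α*β')*(β*α')
      + (α*β')*(β*β') + (β*α')*(β*β') with he2
  set e3 : ℂ := (α*α')*(α*β')*(β*α') + (α*α')*(α*β')*(β*β') + (α*α')*(β*α')*(β*β')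
      + (α*β')*(β*α')*(β*β') with he3
  set e4 : ℂ := (α*α')*(α*β')*(β*α')*(β*β') with he4
  have key : ∀ n : ℕ, c (n+4) = e1*x*c (n+3) - e2*x^2*c (n+2) + e3*x^3*c (n+1) - e4*x^4*c n := by
    intro n
    have q2 : n + 1 + 2 = n + 3 := by omega
    have q3 : n + 2 + 2 = n + 4 := by omega
    have q4 : n + 2 + 1 = n + 3 := by omega
    have rA2 := hSym_rec n α β
    have rA3 := hSym_rec (n+1) α β; rw [q2] at rA3
    have rA4 := hSym_rec (n+2) α β; rw [q3, q4] at rA4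
    have rB2 := hSym_rec n α' β'
    have rB3 := hSym_rec (n+1) α' β'; rw [q2] at rB3
    have rB4 := hSym_rec (n+2) α' β'; rw [q3, q4] at rB4
    simp only [hc, he1, he2, he3, he4]
    rw [rA4, rB4, rA3, rB3, rA2, rB2]
    ring
  have hsh : ∀ k : ℕ, (∑' n : ℕ, c (n + k)) = S - ∑ i ∈ Finset.range k, c i := by
    intro k
    have := Summable.sum_add_tsum_nat_add k hS
    linear_combination this
  have hks : ∀ k : ℕ, Summable fun n : ℕ => c (n + k) := fun k => (summable_nat_add_iff k).mpr hS
  have s4 := hks 4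
  have s3 := (hks 3).mul_left (e1*x)
  have s2 := (hks 2).mul_left (e2*x^2)
  have s1 := (hks 1).mul_left (e3*x^3)
  have s0 := hS.mul_left (e4*x^4)
  have main : (S - ∑ i ∈ Finset.range 4, c i)
      - e1*x*(S - ∑ i ∈ Finset.range 3, c i)
      + e2*x^2*(S - ∑ i ∈ Finset.range 2, c i)
      - e3*x^3*(S - ∑ i ∈ Finset.range 1, c i)
      + e4*x^4*S = 0 := by
    have z : (∑' n : ℕ, (c (n+4) - e1*x*c (n+3) + e2*x^2*c (n+2) - e3*x^3*c (n+1)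
        + e4*x^4*c n)) = 0 := by
      rw [show (0:ℂ) = ∑' _ : ℕ, (0:ℂ) by simp]
      refine tsum_congr fun n => ?_
      rw [key n]; ring
    rw [Summable.tsum_add ((((s4.sub s3)).add s2).sub s1) s0,
        Summable.tsum_sub ((s4.sub s3).add s2) s1,
        Summable.tsum_add (s4.sub s3) s2,
        Summable.tsum_sub s4 s3,
        tsum_mul_left, tsum_mul_left, tsum_mul_left, tsum_mul_left,
        hsh 4, hsh 3, hsh 2, hsh 1] at z
    have h0 : (∑' n : ℕ, c n) = S := rfl
    rw [h0] at z
    linear_combination z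
  have c0 : c 0 = 1 := by simp [hc, hSym_zero]
  have c1 : c 1 = (α + β) * (α' + β') * x := by
    simp only [hc, hSym_one]; try ring
  have c2 : c 2 = (α^2 + α*β + β^2) * (α'^2 + α'*β' + β'^2) * x^2 := by
    simp only [hc, hSym_two]; try ring
  have c3 : c 3 = (α^3 + α^2*β + α*β^2 + β^3) * (α'^3 + α'^2*β' + α'*β'^2 + β'^3) * x^3 := by
    simp only [hc, hSym_three]; try ring
  simp only [Finset.sum_range_succ, Finset.sum_range_zero, c0, c1, c2, c3] at main
  have hP : ((1 - α * α' * x) * (1 - α * β' * x) * (1 - β * α' * x) * (1 - β * β' * x)) ≠ 0 :=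
    mul_ne_zero (mul_ne_zero (mul_ne_zero (one_sub_ne_zero_of_norm_lt_one h1)
      (one_sub_ne_zero_of_norm_lt_one h2)) (one_sub_ne_zero_of_norm_lt_one h3))
      (one_sub_ne_zero_of_norm_lt_one h4)
  rw [eq_mul_inv_iff_mul_eq₀ hP]
  show S * _ = _
  linear_combination main


lemma prime_norm_lt {q : ℕ} (hq : q.Prime) {s : ℂ} {ρ : ℂ} (hρ : ‖ρ‖ < (q : ℝ) ^ s.re) :
    ‖ρ * (q : ℂ) ^ (-s)‖ < 1 := by
  have hq0 : (0:ℝ) < (q:ℝ) ^ s.re := Real.rpow_pos_of_pos (by exact_mod_cast hq.pos) _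
  rw [norm_mul, Complex.norm_natCast_cpow_of_pos hq.pos, Complex.neg_re,
    Real.rpow_neg (by positivity), ← div_eq_mul_inv, div_lt_one hq0]
  exact hρ


/-- The global Rankin–Selberg convolution factorization: for multiplicative sequences
`a`, `b` whose values at prime powers are given by `h_n` of fixed local parameters, and `s`
in the region of absolute convergence dominating all local factors, the Dirichlet series
`∑ a(n)b(n)n^{-s}` equals the Euler product
`∏_q (1 - α_qβ_qα'_qβ'_q q^{-2s}) · [(1-α_qα'_q q^{-s})(1-α_qβ'_q q^{-s})(1-β_qα'_q q^{-s})(1-β_qβ'_q q^{-s})]⁻¹`,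
each linear factor being nonzero and with the product over all primes converging. -/
theorem stmt_2 (a b : ℕ → ℂ) (ha0 : a 0 = 0) (hb0 : b 0 = 0) (ha1 : a 1 = 1) (hb1 : b 1 = 1)
    (haMul : ∀ m n : ℕ, 1 ≤ m → 1 ≤ n → Nat.Coprime m n → a (m * n) = a m * a n)
    (hbMul : ∀ m n : ℕ, 1 ≤ m → 1 ≤ n → Nat.Coprime m n → b (m * n) = b m * b n)
    (α β α' β' : ℕ → ℂ)
    (hA : ∀ q : ℕ, q.Prime → ∀ n : ℕ, a (q ^ n) = hSym n (α q) (β q))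
    (hB : ∀ q : ℕ, q.Prime → ∀ n : ℕ, b (q ^ n) = hSym n (α' q) (β' q))
    (s : ℂ)
    (hsum : Summable (fun n : ℕ => ‖a n * b n‖ * (n : ℝ) ^ (-s.re)))
    (hloc : ∀ q : ℕ, q.Prime →
      ‖α q * α' q‖ < (q : ℝ) ^ s.re ∧ ‖α q * β' q‖ < (q : ℝ) ^ s.re ∧
      ‖β q * α' q‖ < (q : ℝ) ^ s.re ∧ ‖β q * β' q‖ < (q : ℝ) ^ s.re) :
    (∀ q : Nat.Primes,
      (1 - α q * α' q * (q : ℂ) ^ (-s)) ≠ 0 ∧ (1 - α q * β' q * (q : ℂ) ^ (-s)) ≠ 0 ∧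
      (1 - β q * α' q * (q : ℂ) ^ (-s)) ≠ 0 ∧ (1 - β q * β' q * (q : ℂ) ^ (-s)) ≠ 0) ∧
    Multipliable (fun q : Nat.Primes =>
      (1 - α q * β q * α' q * β' q * (q : ℂ) ^ (-(2 * s))) *
        ((1 - α q * α' q * (q : ℂ) ^ (-s)) * (1 - α q * β' q * (q : ℂ) ^ (-s)) *
          (1 - β q * α' q * (q : ℂ) ^ (-s)) * (1 - β q * β' q * (q : ℂ) ^ (-s)))⁻¹) ∧
    (∑' n : ℕ, a n * b n * (n : ℂ) ^ (-s)) =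
      ∏' q : Nat.Primes,
        (1 - α q * β q * α' q * β' q * (q : ℂ) ^ (-(2 * s))) *
          ((1 - α q * α' q * (q : ℂ) ^ (-s)) * (1 - α q * β' q * (q : ℂ) ^ (-s)) *
            (1 - β q * α' q * (q : ℂ) ^ (-s)) * (1 - β q * β' q * (q : ℂ) ^ (-s)))⁻¹ := by
  set f : ℕ → ℂ := fun n => a n * b n * (n : ℂ) ^ (-s) with hf
  have n1 : ∀ q : Nat.Primes, ‖α q * α' q * ((q:ℕ) : ℂ) ^ (-s)‖ < 1 :=
    fun q => prime_norm_lt q.2 (hloc q q.2).1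
  have n2 : ∀ q : Nat.Primes, ‖α q * β' q * ((q:ℕ) : ℂ) ^ (-s)‖ < 1 :=
    fun q => prime_norm_lt q.2 (hloc q q.2).2.1
  have n3 : ∀ q : Nat.Primes, ‖β q * α' q * ((q:ℕ) : ℂ) ^ (-s)‖ < 1 :=
    fun q => prime_norm_lt q.2 (hloc q q.2).2.2.1
  have n4 : ∀ q : Nat.Primes, ‖β q * β' q * ((q:ℕ) : ℂ) ^ (-s)‖ < 1 :=
    fun q => prime_norm_lt q.2 (hloc q q.2).2.2.2
  have hf0 : f 0 = 0 := by simp [hf, ha0]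
  have hf1 : f 1 = 1 := by simp [hf, ha1, hb1]
  have hmul : ∀ {m n : ℕ}, Nat.Coprime m n → f (m * n) = f m * f n := by
    intro m n h
    rcases Nat.eq_zero_or_pos m with rfl | hm
    · rw [Nat.coprime_zero_left] at h
      subst h
      simp [hf, ha0]
    rcases Nat.eq_zero_or_pos n with rfl | hn
    · rw [Nat.coprime_zero_right] at h
      subst h
      simp [hf, ha0]
    simp only [hf]
    rw [haMul m n hm hn h, hbMul m n hm hn h, Nat.cast_mul,
      Complex.natCast_mul_natCast_cpow]
    ring
  have hsum' : Summable fun n : ℕ => ‖f n‖ := by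
    refine hsum.congr fun n => ?_
    rcases Nat.eq_zero_or_pos n with rfl | hn
    · simp [hf, ha0]
    · simp only [hf, norm_mul]
      rw [Complex.norm_natCast_cpow_of_pos hn, Complex.neg_re]
  have euler := EulerProduct.eulerProduct_hasProd hf1 hmul hsum' hf0
  have hfeq : (fun q : Nat.Primes => ∑' e : ℕ, f ((q : ℕ) ^ e)) =
      (fun q : Nat.Primes =>
        (1 - α q * β q * α' q * β' q * (q : ℂ) ^ (-(2 * s))) *
          ((1 - α q * α' q * (q : ℂ) ^ (-s)) * (1 - α q * β' q * (q : ℂ) ^ (-s)) *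
            (1 - β q * α' q * (q : ℂ) ^ (-s)) * (1 - β q * β' q * (q : ℂ) ^ (-s)))⁻¹) := by
    funext q
    have hterm : ∀ e : ℕ, f ((q : ℕ) ^ e) =
        hSym e (α q) (β q) * hSym e (α' q) (β' q) * (((q:ℕ) : ℂ) ^ (-s)) ^ e := by
      intro e
      simp only [hf]
      rw [hA q q.2 e, hB q q.2 e, Nat.cast_pow,
        ← Complex.natCast_cpow_natCast_mul (q : ℕ) e (-s), Complex.cpow_nat_mul]
    rw [tsum_congr hterm, local_identity (n1 q) (n2 q) (n3 q) (n4 q)]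
    have h2s : ((q:ℕ) : ℂ) ^ (-(2 * s)) = (((q:ℕ) : ℂ) ^ (-s)) ^ 2 := by
      rw [show -(2 * s) = ((2:ℕ) : ℂ) * (-s) by push_cast; ring, Complex.cpow_nat_mul]
    rw [h2s]
  rw [hfeq] at euler
  refine ⟨?_, euler.multipliable, ?_⟩
  · intro q
    exact ⟨one_sub_ne_zero_of_norm_lt_one (n1 q), one_sub_ne_zero_of_norm_lt_one (n2 q),
      one_sub_ne_zero_of_norm_lt_one (n3 q), one_sub_ne_zero_of_norm_lt_one (n4 q)⟩
  · exact euler.tprod_eq.symm
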